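/- arXiv:2307.14033 — 2 statements merged into one kernel-verified Lean document; each statement's English description precedes it below -/
import Mathlib

section
/- For m ≥ 6 even, the 3-percolation number of the grid P₅ □ Pₘ equals 2m + 3. -/
open SimpleGraph

/-- The set of vertices eventually infected in `r`-neighbor bootstrap percolation
on the graph `G`, starting from the initially infected set `A`. -/
inductive Infected {V : Type*} (G : SimpleGraph V) (r : ℕ) (A : Set V) : V → Prop
  | init {v : V} : v ∈ A → Infected G r A v
  | step {v : V} (T : Finset V) : r ≤ T.card → (∀ u ∈ T, G.Adj u v) →
      (∀ u ∈ T, Infected G r A u) → Infected G r A v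

/-- `A` is an `r`-percolating set of `G`. -/
def Percolates {V : Type*} (G : SimpleGraph V) (r : ℕ) (A : Set V) : Prop :=
  ∀ v, Infected G r A v

/-- The `r`-percolation number of `G`: minimum size of an `r`-percolating set. -/
noncomputable def percNum (V : Type*) [Fintype V] (G : SimpleGraph V) (r : ℕ) : ℕ :=
  sInf {k | ∃ A : Finset V, A.card = k ∧ Percolates G r (↑A)}

/-- The `n × m` grid graph `Pₙ □ Pₘ`. -/
def gridGraph (n m : ℕ) : SimpleGraph (Fin n × Fin m) :=
  (pathGraph n) □ (pathGraph m)

/-- A boundary vertex of a grid: degree at most 3. -/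
def IsBoundary {V : Type*} (G : SimpleGraph V) (v : V) : Prop :=
  (G.neighborSet v).ncard ≤ 3


open Finset

section general

variable {V : Type*} [DecidableEq V] (G : SimpleGraph V) [DecidableRel G.Adj]

/-- twice the number of edges inside `S` -/
def Dcnt (S : Finset V) : ℕ := ∑ x ∈ S, (S.filter (G.Adj x ·)).card

lemma Dcnt_insert {S : Finset V} {v : V} (hv : v ∉ S) :
    Dcnt G (insert v S) = Dcnt G S + 2 * (S.filter (G.Adj v ·)).card := by
  unfold Dcnt
  rw [Finset.sum_insert hv]
  have hvv : ((insert v S).filter (G.Adj v ·)) = S.filter (G.Adj v ·) := by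
    rw [Finset.filter_insert, if_neg (G.irrefl)]
  have hstep : ∀ x ∈ S, ((insert v S).filter (G.Adj x ·)).card
      = (S.filter (G.Adj x ·)).card + (if G.Adj x v then 1 else 0) := by
    intro x hx
    rw [Finset.filter_insert]
    split_ifs with h
    · rw [Finset.card_insert_of_notMem (fun hmem => hv (Finset.mem_of_mem_filter _ hmem))]
    · omega
  rw [hvv, Finset.sum_congr rfl hstep, Finset.sum_add_distrib]
  have h1 : ∑ x ∈ S, (if G.Adj x v then 1 else 0) = (S.filter (fun x => G.Adj x v)).card :=
    (Finset.card_filter _ _).symm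
  have h2 : S.filter (fun x => G.Adj x v) = S.filter (fun x => G.Adj v x) :=
    Finset.filter_congr (fun x _ => by rw [G.adj_comm])
  rw [h1, h2]
  ring

lemma exists_step {A : Set V} {r : ℕ} {S : Finset V} (hAS : A ⊆ ↑S) {v : V}
    (h : Infected G r A v) :
    v ∉ S → ∃ u, u ∉ S ∧ r ≤ (S.filter (G.Adj u ·)).card := by
  induction h with
  | init hv => exact fun hvS => absurd (hAS hv) hvS
  | @step w T hcard hadj hinf IH =>
    intro hvS
    by_cases hTS : ∀ u ∈ T, u ∈ S
    · refine ⟨w, hvS, le_trans hcard (Finset.card_le_card ?_)⟩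
      exact fun u hu => Finset.mem_filter.2 ⟨hTS u hu, (hadj u hu).symm⟩
    · push_neg at hTS
      obtain ⟨u, huT, huS⟩ := hTS
      exact IH u huT huS

variable [Fintype V]

lemma chain {A : Finset V} (hA : Percolates G 3 ↑A) :
    ∀ (k : ℕ) (S : Finset V), A ⊆ S → Fintype.card V ≤ S.card + k →
      Dcnt G S + 6 * Fintype.card V ≤ Dcnt G Finset.univ + 6 * S.card := by
  intro k
  induction k with
  | zero =>
    intro S hAS hcard
    have hSu : S = Finset.univ := by
      apply Finset.eq_univ_of_card
      have := Finset.card_le_univ S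
      omega

    subst hSu
    rw [Finset.card_univ]
  | succ k IH =>
    intro S hAS hcard
    by_cases hS : S = Finset.univ
    · subst hS; rw [Finset.card_univ]
    · obtain ⟨v, hv⟩ : ∃ v, v ∉ S := by
        by_contra h; push_neg at h; exact hS (Finset.eq_univ_iff_forall.2 h)
      obtain ⟨u, huS, hud⟩ := exists_step G (fun a ha => Finset.coe_subset.2 hAS ha) (hA v) hv
      have h1 : Dcnt G (insert u S) = Dcnt G S + 2 * (S.filter (G.Adj u ·)).card :=
        Dcnt_insert G huS
      have h2 := IH (insert u S) (hAS.trans (Finset.subset_insert u S))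
        (by rw [Finset.card_insert_of_notMem huS]; omega)
      rw [Finset.card_insert_of_notMem huS] at h2
      omega

/-- final form of the monovariant bound -/
lemma perc_card_bound {A : Finset V} (hA : Percolates G 3 ↑A) :
    Dcnt G A + 6 * Fintype.card V ≤ Dcnt G Finset.univ + 6 * A.card :=
  chain G hA (Fintype.card V) A (Finset.Subset.refl A) (by omega)

end general

section gridcount

instance pathAdjDec (n : ℕ) : DecidableRel (pathGraph n).Adj := fun _ _ =>
  decidable_of_iff _ pathGraph_adj.symm

instance gridAdjDec (n m : ℕ) : DecidableRel (gridGraph n m).Adj := fun _ _ =>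
  decidable_of_iff _ boxProd_adj.symm

lemma card_val_eq (m t : ℕ) :
    ((Finset.univ : Finset (Fin m)).filter (fun b => b.val = t)).card
      = if t < m then 1 else 0 := by
  split_ifs with h
  · rw [Finset.card_eq_one]
    refine ⟨⟨t, h⟩, ?_⟩
    ext a
    simp [Fin.ext_iff]
  · rw [Finset.card_eq_zero, Finset.filter_eq_empty_iff]
    intro a _
    intro ha
    exact h (ha ▸ a.isLt)

lemma path_deg (m : ℕ) (j : Fin m) :
    ((Finset.univ : Finset (Fin m)).filter (fun b => (pathGraph m).Adj j b)).card
      = (if j.val + 1 < m then 1 else 0) + (if 0 < j.val then 1 else 0) := by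
  have hsplit : (Finset.univ : Finset (Fin m)).filter (fun b => (pathGraph m).Adj j b)
      = ((Finset.univ : Finset (Fin m)).filter (fun b => b.val = j.val + 1))
        ∪ ((Finset.univ : Finset (Fin m)).filter (fun b => b.val + 1 = j.val)) := by
    rw [← Finset.filter_or]
    apply Finset.filter_congr
    intro b _
    rw [pathGraph_adj]
    omega
  rw [hsplit, Finset.card_union_of_disjoint]
  · congr 1
    · exact card_val_eq m (j.val + 1)
    · by_cases h0 : 0 < j.val
      · have : ((Finset.univ : Finset (Fin m)).filter (fun b => b.val + 1 = j.val))
            = ((Finset.univ : Finset (Fin m)).filter (fun b => b.val = j.val - 1)) := by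
          apply Finset.filter_congr; intro b _; constructor <;> intro h <;> omega
        rw [this, card_val_eq]
        have : j.val - 1 < m := by have := j.isLt; omega
        simp [this, h0]
      · have : ((Finset.univ : Finset (Fin m)).filter (fun b => b.val + 1 = j.val)) = ∅ := by
          rw [Finset.filter_eq_empty_iff]; intro a _; omega
        rw [this]
        simp [h0]
  · rw [Finset.disjoint_filter]
    intro a _ h1 h2
    omega

lemma card_val_ne (m t : ℕ) (ht : t < m) :
    ((Finset.univ : Finset (Fin m)).filter (fun b => ¬ (b.val = t))).card = m - 1 := by
  have h := Finset.card_filter_add_card_filter_not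
    (s := (Finset.univ : Finset (Fin m))) (p := fun b => b.val = t)
  rw [card_val_eq m t, if_pos ht, Finset.card_univ, Fintype.card_fin] at h
  omega

lemma sum_path_deg (m : ℕ) (hm : 1 ≤ m) :
    (∑ j : Fin m,
      ((Finset.univ : Finset (Fin m)).filter (fun b => (pathGraph m).Adj j b)).card)
      + 2 = 2 * m := by
  have h1 : ∀ j : Fin m,
      ((Finset.univ : Finset (Fin m)).filter (fun b => (pathGraph m).Adj j b)).card
      = (if j.val + 1 < m then 1 else 0) + (if 0 < j.val then 1 else 0) := path_deg m
  rw [Finset.sum_congr rfl (fun j _ => h1 j), Finset.sum_add_distrib]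
  have h2 : (∑ j : Fin m, if j.val + 1 < m then 1 else 0)
      = ((Finset.univ : Finset (Fin m)).filter (fun j => j.val + 1 < m)).card :=
    (Finset.card_filter _ _).symm
  have h3 : (∑ j : Fin m, if 0 < j.val then 1 else 0)
      = ((Finset.univ : Finset (Fin m)).filter (fun j => 0 < j.val)).card :=
    (Finset.card_filter _ _).symm
  have h4 : ((Finset.univ : Finset (Fin m)).filter (fun j => j.val + 1 < m))
      = ((Finset.univ : Finset (Fin m)).filter (fun j : Fin m => ¬ (j.val = m - 1))) := by
    apply Finset.filter_congr; intro j _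
    have := j.isLt
    constructor <;> intro h <;> omega
  have h5 : ((Finset.univ : Finset (Fin m)).filter (fun j => 0 < j.val))
      = ((Finset.univ : Finset (Fin m)).filter (fun j : Fin m => ¬ (j.val = 0))) := by
    apply Finset.filter_congr; intro j _
    constructor <;> intro h <;> omega
  rw [h2, h3, h4, h5, card_val_ne m (m-1) (by omega), card_val_ne m 0 (by omega)]
  omega

lemma grid_point_deg (m : ℕ) (x : Fin 5 × Fin m) :
    ((Finset.univ : Finset (Fin 5 × Fin m)).filter ((gridGraph 5 m).Adj x ·)).card
      = ((Finset.univ : Finset (Fin 5)).filter (fun a => (pathGraph 5).Adj x.1 a)).card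
        + ((Finset.univ : Finset (Fin m)).filter (fun b => (pathGraph m).Adj x.2 b)).card := by
  have hsplit : (Finset.univ : Finset (Fin 5 × Fin m)).filter ((gridGraph 5 m).Adj x ·)
      = (((Finset.univ : Finset (Fin 5)).filter (fun a => (pathGraph 5).Adj x.1 a)) ×ˢ {x.2})
        ∪ ({x.1} ×ˢ ((Finset.univ : Finset (Fin m)).filter (fun b => (pathGraph m).Adj x.2 b))) := by
    ext y
    simp only [Finset.mem_filter, Finset.mem_univ, true_and, Finset.mem_union,
      Finset.mem_product, Finset.mem_singleton]
    constructor
    · intro h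
      rcases (boxProd_adj.1 h) with ⟨h1, h2⟩ | ⟨h1, h2⟩
      · exact Or.inl ⟨h1, h2.symm⟩
      · exact Or.inr ⟨h2.symm, h1⟩
    · rintro (⟨h1, h2⟩ | ⟨h1, h2⟩)
      · exact boxProd_adj.2 (Or.inl ⟨h1, h2.symm⟩)
      · exact boxProd_adj.2 (Or.inr ⟨h2, h1.symm⟩)
  rw [hsplit, Finset.card_union_of_disjoint, Finset.card_product, Finset.card_product]
  · simp
  · rw [Finset.disjoint_left]
    rintro ⟨y1, y2⟩ hy1 hy2
    rw [Finset.mem_product] at hy1 hy2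
    simp only [Finset.mem_singleton, Finset.mem_filter] at hy1 hy2
    exact (pathGraph 5).irrefl (hy2.1 ▸ hy1.1.2)

lemma Dcnt_univ_grid (m : ℕ) (hm : 1 ≤ m) :
    Dcnt (gridGraph 5 m) Finset.univ + 10 = 18 * m := by
  have h0 : Dcnt (gridGraph 5 m) Finset.univ
      = ∑ x : Fin 5 × Fin m,
        ((Finset.univ : Finset (Fin 5 × Fin m)).filter ((gridGraph 5 m).Adj x ·)).card := rfl
  rw [h0, Finset.sum_congr rfl (fun x _ => grid_point_deg m x), Finset.sum_add_distrib]
  rw [Fintype.sum_prod_type, Fintype.sum_prod_type]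
  have h5 : (∑ i : Fin 5, ∑ _j : Fin m,
      ((Finset.univ : Finset (Fin 5)).filter (fun a => (pathGraph 5).Adj i a)).card)
      = m * (∑ i : Fin 5,
        ((Finset.univ : Finset (Fin 5)).filter (fun a => (pathGraph 5).Adj i a)).card) := by
    rw [Finset.mul_sum]
    apply Finset.sum_congr rfl
    intro i _
    rw [Finset.sum_const, Finset.card_univ, Fintype.card_fin, smul_eq_mul]
  have hm5 : (∑ i : Fin 5, ∑ j : Fin m,
      ((Finset.univ : Finset (Fin m)).filter (fun b => (pathGraph m).Adj j b)).card)
      = 5 * (∑ j : Fin m,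
        ((Finset.univ : Finset (Fin m)).filter (fun b => (pathGraph m).Adj j b)).card) := by
    rw [Finset.sum_const, Finset.card_univ, Fintype.card_fin, smul_eq_mul]
  rw [h5, hm5]
  have hp5 := sum_path_deg 5 (by omega)
  have hpm := sum_path_deg m hm
  have : (∑ i : Fin 5,
      ((Finset.univ : Finset (Fin 5)).filter (fun a => (pathGraph 5).Adj i a)).card) = 8 := by
    omega
  rw [this]
  have hcalc : 5 * (∑ j : Fin m,
      ((Finset.univ : Finset (Fin m)).filter (fun b => (pathGraph m).Adj j b)).card)
      = 5 * (2 * m) - 10 := by omega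
  omega

end gridcount

section parity

variable {m : ℕ}

lemma infected_mem_closed {B C : Set (Fin m)}
    (hBC : B ⊆ C)
    (hcl : ∀ (v : Fin m) (T : Finset (Fin m)), 2 ≤ T.card →
      (∀ u ∈ T, (pathGraph m).Adj u v) → (∀ u ∈ T, u ∈ C) → v ∈ C) :
    ∀ v, Infected (pathGraph m) 2 B v → v ∈ C := by
  intro v h
  induction h with
  | init h => exact hBC h
  | @step w T hc ha _hi IH => exact hcl w T hc ha (fun u hu => IH u hu)

lemma subset_card_le_one {T : Finset (Fin m)} {t : ℕ}
    (h : ∀ u ∈ T, u.val + 1 = t) : T.card ≤ 1 := by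
  apply Finset.card_le_one.2
  intro a ha b hb
  have h1 := h a ha
  have h2 := h b hb
  exact Fin.ext (by omega)

lemma path_endpoint_zero {B : Set (Fin m)} (hm : 1 ≤ m)
    (h : Infected (pathGraph m) 2 B ⟨0, by omega⟩) : (⟨0, by omega⟩ : Fin m) ∈ B := by
  cases h with
  | init h => exact h
  | step T hc ha _ =>
    exfalso
    have hT : ∀ u ∈ T, u.val + 1 = 2 := by
      intro u hu
      have := pathGraph_adj.1 (ha u hu)
      simp only at this
      omega
    have := subset_card_le_one hT
    omega

lemma path_endpoint_last {B : Set (Fin m)} (hm : 1 ≤ m)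
    (h : Infected (pathGraph m) 2 B ⟨m - 1, by omega⟩) : (⟨m - 1, by omega⟩ : Fin m) ∈ B := by
  cases h with
  | init h => exact h
  | step T hc ha _ =>
    exfalso
    have hT : ∀ u ∈ T, u.val + 1 = m - 1 := by
      intro u hu
      have h2 := pathGraph_adj.1 (ha u hu)
      have h3 := u.isLt
      simp only at h2
      omega
    have := subset_card_le_one hT
    omega

lemma path_gap {B : Set (Fin m)} {t : ℕ} (ht : t + 1 < m)
    (hinf : ∀ j, Infected (pathGraph m) 2 B j)
    (h1 : (⟨t, by omega⟩ : Fin m) ∉ B) (h2 : (⟨t + 1, ht⟩ : Fin m) ∉ B) : False := by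
  set C : Set (Fin m) := {j | j ∈ B ∨ (j.val ≠ t ∧ j.val ≠ t + 1)} with hC
  have hBC : B ⊆ C := fun j hj => Or.inl hj
  have hcl : ∀ (v : Fin m) (T : Finset (Fin m)), 2 ≤ T.card →
      (∀ u ∈ T, (pathGraph m).Adj u v) → (∀ u ∈ T, u ∈ C) → v ∈ C := by
    intro v T hc ha hTC
    by_cases hv1 : v.val = t
    · exfalso
      have hT : ∀ u ∈ T, u.val + 1 = t := by
        intro u hu
        have hadj := pathGraph_adj.1 (ha u hu)
        have huC := hTC u hu
        rcases huC with huB | ⟨hne1, hne2⟩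
        · -- u ∈ B; u adjacent to v with v.val = t, so u.val = t-1 or t+1
          -- if u.val = t+1 then u = ⟨t+1⟩ ∈ B, contradiction
          by_contra hne
          have : u.val = t + 1 := by omega
          exact h2 (by rwa [show (⟨t + 1, ht⟩ : Fin m) = u from Fin.ext this.symm])
        · omega
      have := subset_card_le_one hT
      omega
    · by_cases hv2 : v.val = t + 1
      · exfalso
        have hT : ∀ u ∈ T, u.val + 1 = t + 3 := by
          intro u hu
          have hadj := pathGraph_adj.1 (ha u hu)
          have huC := hTC u hu
          rcases huC with huB | ⟨hne1, hne2⟩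
          · by_contra hne
            have : u.val = t := by omega
            exact h1 (by rwa [show (⟨t, by omega⟩ : Fin m) = u from Fin.ext this.symm])
          · omega
        have := subset_card_le_one hT
        omega
      · exact Or.inr ⟨hv1, hv2⟩
  have hmem : (⟨t, by omega⟩ : Fin m) ∈ C :=
    infected_mem_closed hBC hcl _ (hinf _)
  rcases hmem with hB | ⟨hne, _⟩
  · exact h1 hB
  · exact hne rfl

lemma path_even_struct (hm : 2 ≤ m) (heven : Even m) (B : Set (Fin m))
    (hinf : ∀ j, Infected (pathGraph m) 2 B j) :
    ∃ t : ℕ, ∃ h : t + 1 < m,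
      (⟨t, by omega⟩ : Fin m) ∈ B ∧ (⟨t + 1, h⟩ : Fin m) ∈ B := by
  by_contra hno
  push_neg at hno
  -- parity claim
  have claim : ∀ t, ∀ h : t < m, (Even t → (⟨t, h⟩ : Fin m) ∈ B) ∧
      (¬ Even t → (⟨t, h⟩ : Fin m) ∉ B) := by
    intro t
    induction t with
    | zero =>
      intro h
      refine ⟨fun _ => path_endpoint_zero (by omega) (hinf _), fun he => absurd (Even.zero) he⟩
    | succ t IH =>
      intro h
      have ht : t < m := by omega
      obtain ⟨IH1, IH2⟩ := IH ht
      constructor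
      · intro he
        -- t+1 even, t odd, so ⟨t⟩ ∉ B; by gap lemma one of them in B
        have htB : (⟨t, ht⟩ : Fin m) ∉ B := IH2 (Nat.even_add_one.1 he)
        by_contra hnotB
        exact path_gap h hinf htB hnotB
      · intro he
        -- t+1 odd, t even, so ⟨t⟩ ∈ B; no adjacent pair
        have htB : (⟨t, ht⟩ : Fin m) ∈ B := IH1 (not_not.1 (fun hh => he (Nat.even_add_one.2 hh)))
        intro hmemB
        exact hno t h htB hmemB
  have hlast := path_endpoint_last (m := m) (by omega) (hinf _)
  have hodd : ¬ Even (m - 1) := by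
    rcases heven with ⟨k, hk⟩
    rintro ⟨l, hl⟩
    omega
  exact (claim (m - 1) (by omega)).2 hodd hlast

end parity

section transfer

variable {m : ℕ}

lemma row_transfer {A : Set (Fin 5 × Fin m)} (i0 c : Fin 5) (hc : c ≠ i0)
    (hnb : ∀ a : Fin 5, (pathGraph 5).Adj a i0 → a = c) :
    ∀ v : Fin 5 × Fin m, Infected (gridGraph 5 m) 3 A v → v.1 = i0 →
      Infected (pathGraph m) 2 {j | (i0, j) ∈ A} v.2 := by
  intro v h
  induction h with
  | @init w hw =>
    intro h0
    refine Infected.init ?_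
    have h1 : (i0, w.2) = w := Prod.ext h0.symm rfl
    show (i0, w.2) ∈ A
    rw [h1]
    exact hw
  | @step w T hcard hadj hinf IH =>
    intro h0
    -- classify the elements of T
    have hclass : ∀ u ∈ T, (u.1 = i0 ∧ (pathGraph m).Adj u.2 w.2) ∨ u = (c, w.2) := by
      intro u hu
      rcases boxProd_adj.1 (hadj u hu) with ⟨h1, h2⟩ | ⟨h1, h2⟩
      · right
        rw [h0] at h1
        exact Prod.ext (hnb u.1 h1) h2
      · left
        rw [h0] at h2
        exact ⟨h2, h1⟩
    set T0 := T.filter (fun u => u.1 = i0) with hT0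
    have hsub : T \ T0 ⊆ {(c, w.2)} := by
      intro u hu
      rw [Finset.mem_sdiff] at hu
      obtain ⟨huT, huT0⟩ := hu
      rcases hclass u huT with ⟨h1, _⟩ | h1
      · exact absurd (Finset.mem_filter.2 ⟨huT, h1⟩) huT0
      · simp [h1]
    have hcard0 : 2 ≤ T0.card := by
      have h1 : (T \ T0).card ≤ 1 := le_trans (Finset.card_le_card hsub) (by simp)
      have h2 : T0 ⊆ T := Finset.filter_subset _ _
      have h3 := Finset.card_sdiff_of_subset h2
      omega
    set T' := T0.image Prod.snd with hT'
    have hcard' : 2 ≤ T'.card := by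
      rw [hT', Finset.card_image_of_injOn]
      · exact hcard0
      · intro a ha b hb hab
        rw [hT0, Finset.mem_coe, Finset.mem_filter] at ha hb
        exact Prod.ext (ha.2.trans hb.2.symm) hab
    refine Infected.step T' hcard' ?_ ?_
    · intro x hx
      rw [hT', Finset.mem_image] at hx
      obtain ⟨u, hu, hux⟩ := hx
      rw [hT0, Finset.mem_filter] at hu
      rcases hclass u hu.1 with ⟨_, h2⟩ | h1
      · rwa [hux] at h2
      · exfalso
        apply hc
        rw [← hu.2, h1]
    · intro x hx
      rw [hT', Finset.mem_image] at hx
      obtain ⟨u, hu, hux⟩ := hx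
      rw [hT0, Finset.mem_filter] at hu
      rw [← hux]
      exact IH u hu.1 hu.2

lemma row_pair (hm : 6 ≤ m) (heven : Even m) {A : Finset (Fin 5 × Fin m)}
    (hperc : Percolates (gridGraph 5 m) 3 ↑A) (i0 c : Fin 5) (hc : c ≠ i0)
    (hnb : ∀ a : Fin 5, (pathGraph 5).Adj a i0 → a = c) :
    ∃ t : ℕ, ∃ h : t + 1 < m,
      (i0, (⟨t, by omega⟩ : Fin m)) ∈ A ∧ (i0, (⟨t + 1, h⟩ : Fin m)) ∈ A := by
  have hinf : ∀ j : Fin m, Infected (pathGraph m) 2 {j | (i0, j) ∈ (↑A : Set _)} j :=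
    fun j => row_transfer i0 c hc hnb (i0, j) (hperc (i0, j)) rfl
  obtain ⟨t, h, h1, h2⟩ := path_even_struct (by omega) heven _ hinf
  exact ⟨t, h, Finset.mem_coe.1 h1, Finset.mem_coe.1 h2⟩

lemma nbr_of_zero : ∀ a : Fin 5, (pathGraph 5).Adj a (0 : Fin 5) → a = (1 : Fin 5) := by
  intro a h
  have := pathGraph_adj.1 h
  have ha := a.isLt
  apply Fin.ext
  simp only [Fin.val_zero] at this
  show a.val = 1
  omega

lemma nbr_of_four : ∀ a : Fin 5, (pathGraph 5).Adj a (4 : Fin 5) → a = (3 : Fin 5) := by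
  intro a h
  have := pathGraph_adj.1 h
  have ha := a.isLt
  apply Fin.ext
  show a.val = 3
  have h4 : ((4 : Fin 5) : ℕ) = 4 := rfl
  rw [h4] at this
  omega

end transfer

section lowerbound

variable {m : ℕ}

lemma adj_row_pair (i : Fin 5) {t : ℕ} (h : t + 1 < m) :
    (gridGraph 5 m).Adj (i, (⟨t, by omega⟩ : Fin m)) (i, (⟨t + 1, h⟩ : Fin m)) := by
  apply boxProd_adj.2
  exact Or.inr ⟨pathGraph_adj.2 (Or.inl rfl), rfl⟩

lemma Dcnt_A_ge (hm : 6 ≤ m) (heven : Even m) {A : Finset (Fin 5 × Fin m)}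
    (hperc : Percolates (gridGraph 5 m) 3 ↑A) :
    4 ≤ Dcnt (gridGraph 5 m) A := by
  obtain ⟨t1, ht1, ha1, ha2⟩ := row_pair hm heven hperc 0 1 (by decide) nbr_of_zero
  obtain ⟨t2, ht2, hb1, hb2⟩ := row_pair hm heven hperc 4 3 (by decide) nbr_of_four
  set x1 : Fin 5 × Fin m := (0, ⟨t1, by omega⟩) with hx1
  set x2 : Fin 5 × Fin m := (0, ⟨t1 + 1, ht1⟩) with hx2
  set x3 : Fin 5 × Fin m := (4, ⟨t2, by omega⟩) with hx3
  set x4 : Fin 5 × Fin m := (4, ⟨t2 + 1, ht2⟩) with hx4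
  have hne12 : x1 ≠ x2 := by
    rw [hx1, hx2, Ne, Prod.mk.injEq]
    rintro ⟨-, h⟩
    rw [Fin.mk.injEq] at h
    omega
  have hne34 : x3 ≠ x4 := by
    rw [hx3, hx4, Ne, Prod.mk.injEq]
    rintro ⟨-, h⟩
    rw [Fin.mk.injEq] at h
    omega
  have hne13 : x1 ≠ x3 := by
    rw [hx1, hx3, Ne, Prod.mk.injEq]
    rintro ⟨h, -⟩
    exact absurd h (by decide)
  have hne14 : x1 ≠ x4 := by
    rw [hx1, hx4, Ne, Prod.mk.injEq]
    rintro ⟨h, -⟩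
    exact absurd h (by decide)
  have hne23 : x2 ≠ x3 := by
    rw [hx2, hx3, Ne, Prod.mk.injEq]
    rintro ⟨h, -⟩
    exact absurd h (by decide)
  have hne24 : x2 ≠ x4 := by
    rw [hx2, hx4, Ne, Prod.mk.injEq]
    rintro ⟨h, -⟩
    exact absurd h (by decide)
  set F : Finset (Fin 5 × Fin m) := insert x1 (insert x2 (insert x3 {x4})) with hF
  have hFA : F ⊆ A := by
    intro x hx
    rw [hF] at hx
    simp only [Finset.mem_insert, Finset.mem_singleton] at hx
    rcases hx with rfl | rfl | rfl | rfl
    · exact ha1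
    · exact ha2
    · exact hb1
    · exact hb2
  have hcardF : F.card = 4 := by
    rw [hF]
    rw [Finset.card_insert_of_notMem (by simp [hne12, hne13, hne14]),
      Finset.card_insert_of_notMem (by simp [hne23, hne24]),
      Finset.card_insert_of_notMem (by simp [hne34]),
      Finset.card_singleton]
  have hone : ∀ x ∈ F, 1 ≤ (A.filter ((gridGraph 5 m).Adj x ·)).card := by
    intro x hx
    apply Finset.card_pos.2
    rw [hF] at hx
    simp only [Finset.mem_insert, Finset.mem_singleton] at hx
    rcases hx with rfl | rfl | rfl | rfl
    · exact ⟨x2, Finset.mem_filter.2 ⟨ha2, adj_row_pair 0 ht1⟩⟩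
    · exact ⟨x1, Finset.mem_filter.2 ⟨ha1, ((gridGraph 5 m).adj_comm _ _).1 (adj_row_pair 0 ht1)⟩⟩
    · exact ⟨x4, Finset.mem_filter.2 ⟨hb2, adj_row_pair 4 ht2⟩⟩
    · exact ⟨x3, Finset.mem_filter.2 ⟨hb1, ((gridGraph 5 m).adj_comm _ _).1 (adj_row_pair 4 ht2)⟩⟩
  calc (4 : ℕ) = ∑ _x ∈ F, 1 := by rw [Finset.sum_const, hcardF, smul_eq_mul, mul_one]
    _ ≤ ∑ x ∈ F, (A.filter ((gridGraph 5 m).Adj x ·)).card := Finset.sum_le_sum hone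
    _ ≤ ∑ x ∈ A, (A.filter ((gridGraph 5 m).Adj x ·)).card :=
        Finset.sum_le_sum_of_subset hFA
    _ = Dcnt (gridGraph 5 m) A := rfl

lemma grid_lower_bound (hm : 6 ≤ m) (heven : Even m) {A : Finset (Fin 5 × Fin m)}
    (hperc : Percolates (gridGraph 5 m) 3 ↑A) : 2 * m + 3 ≤ A.card := by
  have hDu := Dcnt_univ_grid m (by omega)
  have hchain := perc_card_bound (gridGraph 5 m) hperc
  have hDA := Dcnt_A_ge hm heven hperc
  have hN : Fintype.card (Fin 5 × Fin m) = 5 * m := by simp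
  rw [hN] at hchain
  omega

end lowerbound

section upper

variable {m : ℕ}

def jfun (m : ℕ) (h : 0 < m) (t : ℕ) : Fin m := ⟨t % m, Nat.mod_lt t h⟩

lemma jfun_eq (h : 0 < m) {t : ℕ} (ht : t < m) : jfun m h t = ⟨t, ht⟩ :=
  Fin.ext (Nat.mod_eq_of_lt ht)

/-- enumeration of the seed set -/
def enc (m : ℕ) (h : 0 < m) (k : ℕ) : Fin 5 × Fin m :=
  if k < m / 2 then ((0 : Fin 5), jfun m h (2 * k))
  else if k = m / 2 then ((0 : Fin 5), jfun m h (m - 1))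
  else if k ≤ 2 * (m / 2) then ((4 : Fin 5), jfun m h (2 * (k - m / 2 - 1)))
  else if k = 2 * (m / 2) + 1 then ((4 : Fin 5), jfun m h (m - 1))
  else if k ≤ 3 * (m / 2) + 1 then ((1 : Fin 5), jfun m h (2 * (k - 2 * (m / 2) - 2) + 1))
  else if k ≤ 4 * (m / 2) + 1 then ((3 : Fin 5), jfun m h (2 * (k - 3 * (m / 2) - 2) + 1))
  else ((2 : Fin 5), jfun m h 0)

/-- seed set of size 2m+3 for the 5 × m grid, m even:
rows 0 and 4: even columns plus column m-1; rows 1 and 3: odd columns; plus (2,0). -/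
def seedA (m : ℕ) (hm : 6 ≤ m) : Finset (Fin 5 × Fin m) :=
  (Finset.range (2 * m + 3)).image (enc m (by omega))

lemma seedA_card (hm : 6 ≤ m) : (seedA m hm).card ≤ 2 * m + 3 :=
  le_trans Finset.card_image_le (le_of_eq (Finset.card_range _))

lemma seedA_mem_row0 (hm : 6 ≤ m) (heven : Even m) {t : ℕ} (ht : t < m)
    (hpar : t % 2 = 0 ∨ t = m - 1) :
    ((0 : Fin 5), (⟨t, ht⟩ : Fin m)) ∈ seedA m hm := by
  obtain ⟨w, hw⟩ := heven
  have hq : m / 2 = w := by omega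
  rcases hpar with hp | hp
  · refine Finset.mem_image.2 ⟨t / 2, Finset.mem_range.2 (by omega), ?_⟩
    unfold enc
    rw [if_pos (by omega), show 2 * (t / 2) = t by omega, jfun_eq _ ht]
  · refine Finset.mem_image.2 ⟨m / 2, Finset.mem_range.2 (by omega), ?_⟩
    unfold enc
    rw [if_neg (by omega), if_pos rfl, jfun_eq _ (show m - 1 < m by omega)]
    subst hp
    rfl

lemma seedA_mem_row4 (hm : 6 ≤ m) (heven : Even m) {t : ℕ} (ht : t < m)
    (hpar : t % 2 = 0 ∨ t = m - 1) :
    ((4 : Fin 5), (⟨t, ht⟩ : Fin m)) ∈ seedA m hm := by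
  obtain ⟨w, hw⟩ := heven
  have hq : m / 2 = w := by omega
  rcases hpar with hp | hp
  · refine Finset.mem_image.2 ⟨m / 2 + 1 + t / 2, Finset.mem_range.2 (by omega), ?_⟩
    unfold enc
    rw [if_neg (by omega), if_neg (by omega), if_pos (by omega),
      show 2 * (m / 2 + 1 + t / 2 - m / 2 - 1) = t by omega, jfun_eq _ ht]
  · refine Finset.mem_image.2 ⟨2 * (m / 2) + 1, Finset.mem_range.2 (by omega), ?_⟩
    unfold enc
    rw [if_neg (by omega), if_neg (by omega), if_neg (by omega), if_pos rfl,
      jfun_eq _ (show m - 1 < m by omega)]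
    subst hp
    rfl

lemma seedA_mem_row1 (hm : 6 ≤ m) (heven : Even m) {t : ℕ} (ht : t < m) (hpar : t % 2 = 1) :
    ((1 : Fin 5), (⟨t, ht⟩ : Fin m)) ∈ seedA m hm := by
  obtain ⟨w, hw⟩ := heven
  have hq : m / 2 = w := by omega
  refine Finset.mem_image.2 ⟨2 * (m / 2) + 2 + t / 2, Finset.mem_range.2 (by omega), ?_⟩
  unfold enc
  rw [if_neg (by omega), if_neg (by omega), if_neg (by omega), if_neg (by omega),
    if_pos (by omega), show 2 * (2 * (m / 2) + 2 + t / 2 - 2 * (m / 2) - 2) + 1 = t by omega,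
    jfun_eq _ ht]

lemma seedA_mem_row3 (hm : 6 ≤ m) (heven : Even m) {t : ℕ} (ht : t < m) (hpar : t % 2 = 1) :
    ((3 : Fin 5), (⟨t, ht⟩ : Fin m)) ∈ seedA m hm := by
  obtain ⟨w, hw⟩ := heven
  have hq : m / 2 = w := by omega
  refine Finset.mem_image.2 ⟨3 * (m / 2) + 2 + t / 2, Finset.mem_range.2 (by omega), ?_⟩
  unfold enc
  rw [if_neg (by omega), if_neg (by omega), if_neg (by omega), if_neg (by omega),
    if_neg (by omega), if_pos (by omega),
    show 2 * (3 * (m / 2) + 2 + t / 2 - 3 * (m / 2) - 2) + 1 = t by omega, jfun_eq _ ht]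

lemma seedA_mem_row2 (hm : 6 ≤ m) (heven : Even m) :
    ((2 : Fin 5), (⟨0, by omega⟩ : Fin m)) ∈ seedA m hm := by
  obtain ⟨w, hw⟩ := heven
  have hq : m / 2 = w := by omega
  refine Finset.mem_image.2 ⟨4 * (m / 2) + 2, Finset.mem_range.2 (by omega), ?_⟩
  unfold enc
  rw [if_neg (by omega), if_neg (by omega), if_neg (by omega), if_neg (by omega),
    if_neg (by omega), if_neg (by omega), jfun_eq _ (show 0 < m by omega)]

end upper

section cascade

variable {m : ℕ}

lemma adjH (i : Fin 5) {a b : Fin m} (h : a.val + 1 = b.val) :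
    (gridGraph 5 m).Adj (i, a) (i, b) :=
  boxProd_adj.2 (Or.inr ⟨pathGraph_adj.2 (Or.inl h), rfl⟩)

lemma adjV {a b : Fin 5} (j : Fin m) (h : a.val + 1 = b.val) :
    (gridGraph 5 m).Adj (a, j) (b, j) :=
  boxProd_adj.2 (Or.inl ⟨pathGraph_adj.2 (Or.inl h), rfl⟩)

lemma step3 {W : Type*} [DecidableEq W] {G : SimpleGraph W} {A : Set W} {v u1 u2 u3 : W}
    (h12 : u1 ≠ u2) (h13 : u1 ≠ u3) (h23 : u2 ≠ u3)
    (a1 : G.Adj u1 v) (a2 : G.Adj u2 v) (a3 : G.Adj u3 v)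
    (i1 : Infected G 3 A u1) (i2 : Infected G 3 A u2) (i3 : Infected G 3 A u3) :
    Infected G 3 A v := by
  refine Infected.step {u1, u2, u3} ?_ ?_ ?_
  · rw [Finset.card_insert_of_notMem (by simp [h12, h13]),
      Finset.card_insert_of_notMem (by simp [h23]), Finset.card_singleton]
  · intro u hu
    simp only [Finset.mem_insert, Finset.mem_singleton] at hu
    rcases hu with rfl | rfl | rfl
    exacts [a1, a2, a3]
  · intro u hu
    simp only [Finset.mem_insert, Finset.mem_singleton] at hu
    rcases hu with rfl | rfl | rfl
    exacts [i1, i2, i3]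

-- inequality helpers for products of Fin
lemma prod_ne_row {i1 i2 : Fin 5} {a b : Fin m} (h : i1 ≠ i2) : (i1, a) ≠ (i2, b) := by
  intro hcon
  rw [Prod.mk.injEq] at hcon
  exact h hcon.1

lemma prod_ne_col {i1 i2 : Fin 5} {a b : Fin m} (h : a.val ≠ b.val) : (i1, a) ≠ (i2, b) := by
  intro hcon
  rw [Prod.mk.injEq] at hcon
  exact h (congrArg Fin.val hcon.2)

lemma inf_row0 (hm : 6 ≤ m) (heven : Even m) :
    ∀ (t : ℕ) (ht : t < m),
      Infected (gridGraph 5 m) 3 ↑(seedA m hm) ((0 : Fin 5), (⟨t, ht⟩ : Fin m)) := by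
  intro t ht
  by_cases hp : t % 2 = 0 ∨ t = m - 1
  · exact Infected.init (Finset.mem_coe.2 (seedA_mem_row0 hm heven ht hp))
  · push_neg at hp
    obtain ⟨hp1, hp2⟩ := hp
    have h1t : 1 ≤ t := by omega
    have ht1 : t + 1 < m := by omega
    refine step3 (u1 := ((0 : Fin 5), (⟨t - 1, by omega⟩ : Fin m)))
      (u2 := ((0 : Fin 5), (⟨t + 1, ht1⟩ : Fin m)))
      (u3 := ((1 : Fin 5), (⟨t, ht⟩ : Fin m)))
      (prod_ne_col (by show t - 1 ≠ t + 1; omega)) (prod_ne_row (by decide)) (prod_ne_row (by decide))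
      (adjH 0 (by show t - 1 + 1 = t; omega)) ((adjH 0 rfl).symm) ((adjV _ (by decide)).symm)
      ?_ ?_ ?_
    · exact Infected.init (Finset.mem_coe.2
        (seedA_mem_row0 hm heven (by omega) (Or.inl (by omega))))
    · exact Infected.init (Finset.mem_coe.2
        (seedA_mem_row0 hm heven ht1 (Or.inl (by omega))))
    · exact Infected.init (Finset.mem_coe.2 (seedA_mem_row1 hm heven ht (by omega)))

lemma inf_row4 (hm : 6 ≤ m) (heven : Even m) :
    ∀ (t : ℕ) (ht : t < m),
      Infected (gridGraph 5 m) 3 ↑(seedA m hm) ((4 : Fin 5), (⟨t, ht⟩ : Fin m)) := by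
  intro t ht
  by_cases hp : t % 2 = 0 ∨ t = m - 1
  · exact Infected.init (Finset.mem_coe.2 (seedA_mem_row4 hm heven ht hp))
  · push_neg at hp
    obtain ⟨hp1, hp2⟩ := hp
    have h1t : 1 ≤ t := by omega
    have ht1 : t + 1 < m := by omega
    refine step3 (u1 := ((4 : Fin 5), (⟨t - 1, by omega⟩ : Fin m)))
      (u2 := ((4 : Fin 5), (⟨t + 1, ht1⟩ : Fin m)))
      (u3 := ((3 : Fin 5), (⟨t, ht⟩ : Fin m)))
      (prod_ne_col (by show t - 1 ≠ t + 1; omega)) (prod_ne_row (by decide)) (prod_ne_row (by decide))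
      (adjH 4 (by show t - 1 + 1 = t; omega)) ((adjH 4 rfl).symm) (adjV _ (by decide))
      ?_ ?_ ?_
    · exact Infected.init (Finset.mem_coe.2
        (seedA_mem_row4 hm heven (by omega) (Or.inl (by omega))))
    · exact Infected.init (Finset.mem_coe.2
        (seedA_mem_row4 hm heven ht1 (Or.inl (by omega))))
    · exact Infected.init (Finset.mem_coe.2 (seedA_mem_row3 hm heven ht (by omega)))

lemma inf_row1 (hm : 6 ≤ m) (heven : Even m) :
    ∀ (t : ℕ) (ht : t < m),
      Infected (gridGraph 5 m) 3 ↑(seedA m hm) ((1 : Fin 5), (⟨t, ht⟩ : Fin m)) := by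
  intro t ht
  by_cases hp : t % 2 = 1
  · exact Infected.init (Finset.mem_coe.2 (seedA_mem_row1 hm heven ht hp))
  · have hpe : t % 2 = 0 := by omega
    by_cases ht0 : t = 0
    · subst ht0
      refine step3 (u1 := ((0 : Fin 5), (⟨0, ht⟩ : Fin m)))
        (u2 := ((2 : Fin 5), (⟨0, ht⟩ : Fin m)))
        (u3 := ((1 : Fin 5), (⟨1, by omega⟩ : Fin m)))
        (prod_ne_row (by decide)) (prod_ne_row (by decide)) (prod_ne_row (by decide))
        (adjV _ (by decide)) ((adjV _ (by decide)).symm) ((adjH 1 rfl).symm)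
        ?_ ?_ ?_
      · exact Infected.init (Finset.mem_coe.2
          (seedA_mem_row0 hm heven ht (Or.inl (by omega))))
      · have h0 : (⟨0, ht⟩ : Fin m) = (⟨0, by omega⟩ : Fin m) := rfl
        rw [h0]
        exact Infected.init (Finset.mem_coe.2 (seedA_mem_row2 hm heven))
      · exact Infected.init (Finset.mem_coe.2 (seedA_mem_row1 hm heven (by omega) (by omega)))
    · have h2t : 2 ≤ t := by omega
      have ht1 : t + 1 < m := by
        obtain ⟨w, hw⟩ := heven
        omega
      refine step3 (u1 := ((0 : Fin 5), (⟨t, ht⟩ : Fin m)))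
        (u2 := ((1 : Fin 5), (⟨t - 1, by omega⟩ : Fin m)))
        (u3 := ((1 : Fin 5), (⟨t + 1, ht1⟩ : Fin m)))
        (prod_ne_row (by decide)) (prod_ne_row (by decide)) (prod_ne_col (by show t - 1 ≠ t + 1; omega))
        (adjV _ (by decide)) (adjH 1 (by show t - 1 + 1 = t; omega)) ((adjH 1 rfl).symm)
        ?_ ?_ ?_
      · exact Infected.init (Finset.mem_coe.2
          (seedA_mem_row0 hm heven ht (Or.inl hpe)))
      · exact Infected.init (Finset.mem_coe.2
          (seedA_mem_row1 hm heven (by omega) (by omega)))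
      · exact Infected.init (Finset.mem_coe.2
          (seedA_mem_row1 hm heven ht1 (by omega)))

lemma inf_row3 (hm : 6 ≤ m) (heven : Even m) :
    ∀ (t : ℕ) (ht : t < m),
      Infected (gridGraph 5 m) 3 ↑(seedA m hm) ((3 : Fin 5), (⟨t, ht⟩ : Fin m)) := by
  intro t ht
  by_cases hp : t % 2 = 1
  · exact Infected.init (Finset.mem_coe.2 (seedA_mem_row3 hm heven ht hp))
  · have hpe : t % 2 = 0 := by omega
    by_cases ht0 : t = 0
    · subst ht0
      refine step3 (u1 := ((4 : Fin 5), (⟨0, ht⟩ : Fin m)))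
        (u2 := ((2 : Fin 5), (⟨0, ht⟩ : Fin m)))
        (u3 := ((3 : Fin 5), (⟨1, by omega⟩ : Fin m)))
        (prod_ne_row (by decide)) (prod_ne_row (by decide)) (prod_ne_row (by decide))
        ((adjV _ (by decide)).symm) (adjV _ (by decide)) ((adjH 3 rfl).symm)
        ?_ ?_ ?_
      · exact Infected.init (Finset.mem_coe.2
          (seedA_mem_row4 hm heven ht (Or.inl (by omega))))
      · have h0 : (⟨0, ht⟩ : Fin m) = (⟨0, by omega⟩ : Fin m) := rfl
        rw [h0]
        exact Infected.init (Finset.mem_coe.2 (seedA_mem_row2 hm heven))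
      · exact Infected.init (Finset.mem_coe.2 (seedA_mem_row3 hm heven (by omega) (by omega)))
    · have h2t : 2 ≤ t := by omega
      have ht1 : t + 1 < m := by
        obtain ⟨w, hw⟩ := heven
        omega
      refine step3 (u1 := ((4 : Fin 5), (⟨t, ht⟩ : Fin m)))
        (u2 := ((3 : Fin 5), (⟨t - 1, by omega⟩ : Fin m)))
        (u3 := ((3 : Fin 5), (⟨t + 1, ht1⟩ : Fin m)))
        (prod_ne_row (by decide)) (prod_ne_row (by decide)) (prod_ne_col (by show t - 1 ≠ t + 1; omega))
        ((adjV _ (by decide)).symm) (adjH 3 (by show t - 1 + 1 = t; omega)) ((adjH 3 rfl).symm)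
        ?_ ?_ ?_
      · exact Infected.init (Finset.mem_coe.2
          (seedA_mem_row4 hm heven ht (Or.inl hpe)))
      · exact Infected.init (Finset.mem_coe.2
          (seedA_mem_row3 hm heven (by omega) (by omega)))
      · exact Infected.init (Finset.mem_coe.2
          (seedA_mem_row3 hm heven ht1 (by omega)))

lemma inf_row2 (hm : 6 ≤ m) (heven : Even m) :
    ∀ (t : ℕ) (ht : t < m),
      Infected (gridGraph 5 m) 3 ↑(seedA m hm) ((2 : Fin 5), (⟨t, ht⟩ : Fin m)) := by
  intro t
  induction t with
  | zero =>
    intro ht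
    have h0 : (⟨0, ht⟩ : Fin m) = (⟨0, by omega⟩ : Fin m) := rfl
    rw [h0]
    exact Infected.init (Finset.mem_coe.2 (seedA_mem_row2 hm heven))
  | succ t IH =>
    intro ht
    refine step3 (u1 := ((2 : Fin 5), (⟨t, by omega⟩ : Fin m)))
      (u2 := ((1 : Fin 5), (⟨t + 1, ht⟩ : Fin m)))
      (u3 := ((3 : Fin 5), (⟨t + 1, ht⟩ : Fin m)))
      (prod_ne_row (by decide)) (prod_ne_row (by decide)) (prod_ne_row (by decide))
      (adjH 2 rfl) (adjV _ (by decide)) ((adjV _ (by decide)).symm)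
      (IH (by omega)) (inf_row1 hm heven (t + 1) ht) (inf_row3 hm heven (t + 1) ht)

lemma seedA_perc (hm : 6 ≤ m) (heven : Even m) :
    Percolates (gridGraph 5 m) 3 ↑(seedA m hm) := by
  rintro ⟨i, j⟩
  obtain ⟨jv, hjv⟩ := j
  have h5 := i.isLt
  rcases i with ⟨iv, hiv⟩
  interval_cases iv
  · exact inf_row0 hm heven jv hjv
  · exact inf_row1 hm heven jv hjv
  · exact inf_row2 hm heven jv hjv
  · exact inf_row3 hm heven jv hjv
  · exact inf_row4 hm heven jv hjv

end cascade

theorem stmt_8 (m : ℕ) (hm : 6 ≤ m) (heven : Even m) :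
    percNum (Fin 5 × Fin m) (gridGraph 5 m) 3 = 2 * m + 3 := by
  have hperc := seedA_perc hm heven
  have hlow := grid_lower_bound hm heven hperc
  have hcard : (seedA m hm).card = 2 * m + 3 := le_antisymm (seedA_card hm) hlow
  have hmem : 2 * m + 3 ∈ {k | ∃ A : Finset (Fin 5 × Fin m), A.card = k ∧
      Percolates (gridGraph 5 m) 3 ↑A} := ⟨seedA m hm, hcard, hperc⟩
  unfold percNum
  apply le_antisymm
  · exact Nat.sInf_le hmem
  · apply le_csInf ⟨_, hmem⟩
    rintro k ⟨B, rfl, hB⟩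
    exact grid_lower_bound hm heven hB
end

section
/- In the grid G = P₅ □ Pₘ (m ≥ 5) with columns V₁, …, Vₘ, every 3-percolating set S satisfies |S ∩ (Vᵢ ∪ Vᵢ₊₁)| ≥ 4 for all i with 2 ≤ i ≤ m − 1. -/
open SimpleGraph

section Aux

variable {V : Type*}

/-- The iterative infection process. -/
def iseq (G : SimpleGraph V) (A : Set V) : ℕ → Set V
  | 0 => A
  | n + 1 => iseq G A n ∪
      {v | ∃ T : Finset V, 3 ≤ T.card ∧ (∀ u ∈ T, G.Adj u v) ∧ ∀ u ∈ T, u ∈ iseq G A n}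

lemma iseq_mono (G : SimpleGraph V) (A : Set V) : Monotone (iseq G A) := by
  apply monotone_nat_of_le_succ
  intro n
  exact Set.subset_union_left

lemma infected_mem_iseq {G : SimpleGraph V} {A : Set V} {v : V}
    (h : Infected G 3 A v) : ∃ n, v ∈ iseq G A n := by
  induction h with
  | init h => exact ⟨0, h⟩
  | step T hcard hadj hinf ih =>
    choose f hf using ih
    refine ⟨T.attach.sup (fun u => f u.1 u.2) + 1, Or.inr ?_⟩
    refine ⟨T, hcard, hadj, fun u hu => ?_⟩
    exact iseq_mono G A (Finset.le_sup (Finset.mem_attach T ⟨u, hu⟩)) (hf u hu)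

/-- Infection times: every non-seed vertex has at least 3 strictly earlier
infected neighbors. -/
lemma exists_time {G : SimpleGraph V} {A : Set V} (hperc : Percolates G 3 A) :
    ∃ t : V → ℕ, ∀ v, v ∉ A →
      ∃ T : Finset V, 3 ≤ T.card ∧ ∀ u ∈ T, G.Adj u v ∧ t u < t v := by
  classical
  have h : ∀ v, ∃ n, v ∈ iseq G A n := fun v => infected_mem_iseq (hperc v)
  refine ⟨fun v => Nat.find (h v), fun v hv => ?_⟩
  have hmem : v ∈ iseq G A (Nat.find (h v)) := Nat.find_spec (h v)
  cases hn : Nat.find (h v) with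
  | zero => rw [hn] at hmem; exact absurd hmem hv
  | succ k =>
    rw [hn] at hmem
    rcases hmem with hmem | hmem
    · have hle : Nat.find (h v) ≤ k := Nat.find_le hmem
      omega
    · obtain ⟨T, hT1, hT2, hT3⟩ := hmem
      refine ⟨T, hT1, fun u hu => ⟨hT2 u hu, ?_⟩⟩
      have hle : Nat.find (h u) ≤ k := Nat.find_le (hT3 u hu)
      show Nat.find (h u) < Nat.find (h v)
      omega

lemma grid_adj {m : ℕ} {u v : Fin 5 × Fin m} :
    (gridGraph 5 m).Adj u v ↔
      (((u.1 : ℕ) + 1 = v.1 ∨ (v.1 : ℕ) + 1 = u.1) ∧ u.2 = v.2) ∨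
      (((u.2 : ℕ) + 1 = v.2 ∨ (v.2 : ℕ) + 1 = u.2) ∧ u.1 = v.1) := by
  simp [gridGraph, boxProd_adj, pathGraph_adj]

/-- Edge code for pairs inside the strip of columns `c`, `c+1`. -/
def pcode (c : ℕ) {m : ℕ} (p : (Fin 5 × Fin m) × (Fin 5 × Fin m)) : ℕ :=
  if (p.1.1 : ℕ) = (p.2.1 : ℕ) then 8 + (p.1.1 : ℕ)
  else ((p.1.1 : ℕ) + (p.2.1 : ℕ) - 1) + ((p.1.2 : ℕ) - c)

set_option maxHeartbeats 1000000 in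
lemma pcode_lt {m : ℕ} (c : ℕ) (t : Fin 5 × Fin m → ℕ)
    (p : (Fin 5 × Fin m) × (Fin 5 × Fin m))
    (h1 : (p.1.2 : ℕ) = c ∨ (p.1.2 : ℕ) = c + 1)
    (h2 : (p.2.2 : ℕ) = c ∨ (p.2.2 : ℕ) = c + 1)
    (hadj : (gridGraph 5 m).Adj p.2 p.1) :
    pcode c p < 13 := by
  have ha := grid_adj.1 hadj
  have hr1 : (p.1.1 : ℕ) < 5 := p.1.1.isLt
  have hr2 : (p.2.1 : ℕ) < 5 := p.2.1.isLt
  rw [pcode]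
  rcases ha with ⟨hr, hcol⟩ | ⟨hcol, hr⟩
  · have hrne : ¬ (p.1.1 : ℕ) = (p.2.1 : ℕ) := by omega
    rw [if_neg hrne]
    omega
  · have hre : (p.1.1 : ℕ) = (p.2.1 : ℕ) := by rw [hr]
    rw [if_pos hre]
    omega

set_option maxHeartbeats 2000000 in
lemma pcode_inj {m : ℕ} (c : ℕ) (t : Fin 5 × Fin m → ℕ)
    (p q : (Fin 5 × Fin m) × (Fin 5 × Fin m))
    (hp1 : (p.1.2 : ℕ) = c ∨ (p.1.2 : ℕ) = c + 1)
    (hp2 : (p.2.2 : ℕ) = c ∨ (p.2.2 : ℕ) = c + 1)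
    (hpadj : (gridGraph 5 m).Adj p.2 p.1)
    (hpt : t p.2 < t p.1)
    (hq1 : (q.1.2 : ℕ) = c ∨ (q.1.2 : ℕ) = c + 1)
    (hq2 : (q.2.2 : ℕ) = c ∨ (q.2.2 : ℕ) = c + 1)
    (hqadj : (gridGraph 5 m).Adj q.2 q.1)
    (hqt : t q.2 < t q.1)
    (hpq : pcode c p = pcode c q) : p = q := by
  have hpa := grid_adj.1 hpadj
  have hqa := grid_adj.1 hqadj
  have hpr1 : (p.1.1 : ℕ) < 5 := p.1.1.isLt
  have hpr2 : (p.2.1 : ℕ) < 5 := p.2.1.isLt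
  have hqr1 : (q.1.1 : ℕ) < 5 := q.1.1.isLt
  have hqr2 : (q.2.1 : ℕ) < 5 := q.2.1.isLt
  rw [pcode, pcode] at hpq
  have hfin : ∀ a b : Fin 5 × Fin m, (a.1 : ℕ) = (b.1 : ℕ) → (a.2 : ℕ) = (b.2 : ℕ) →
      a = b := fun a b h1 h2 => Prod.ext (Fin.ext h1) (Fin.ext h2)
  rcases hpa with ⟨hpr, hpcol⟩ | ⟨hpcol, hpr⟩
  · -- p vertical
    have hpc : (p.2.2 : ℕ) = (p.1.2 : ℕ) := congrArg Fin.val hpcol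
    rw [if_neg (by omega : ¬ (p.1.1 : ℕ) = (p.2.1 : ℕ))] at hpq
    rcases hqa with ⟨hqr, hqcol⟩ | ⟨hqcol, hqr⟩
    · -- q vertical
      have hqc : (q.2.2 : ℕ) = (q.1.2 : ℕ) := congrArg Fin.val hqcol
      rw [if_neg (by omega : ¬ (q.1.1 : ℕ) = (q.2.1 : ℕ))] at hpq
      have hdisj : ((p.1.1 : ℕ) = (q.1.1 : ℕ) ∧ (p.2.1 : ℕ) = (q.2.1 : ℕ) ∧
          (p.1.2 : ℕ) = (q.1.2 : ℕ) ∧ (p.2.2 : ℕ) = (q.2.2 : ℕ)) ∨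
          ((p.1.1 : ℕ) = (q.2.1 : ℕ) ∧ (p.2.1 : ℕ) = (q.1.1 : ℕ) ∧
          (p.1.2 : ℕ) = (q.2.2 : ℕ) ∧ (p.2.2 : ℕ) = (q.1.2 : ℕ)) := by omega
      rcases hdisj with ⟨e1, e2, e3, e4⟩ | ⟨e1, e2, e3, e4⟩
      · exact Prod.ext (hfin _ _ e1 e3) (hfin _ _ e2 e4)
      · exfalso
        rw [hfin _ _ e1 e3, hfin _ _ e2 e4] at hpt
        omega
    · -- q horizontal : codes in disjoint ranges
      exfalso
      have hqc : (q.2.1 : ℕ) = (q.1.1 : ℕ) := congrArg Fin.val hqr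
      rw [if_pos (by omega : (q.1.1 : ℕ) = (q.2.1 : ℕ))] at hpq
      omega
  · -- p horizontal
    have hpc : (p.2.1 : ℕ) = (p.1.1 : ℕ) := congrArg Fin.val hpr
    rw [if_pos (by omega : (p.1.1 : ℕ) = (p.2.1 : ℕ))] at hpq
    rcases hqa with ⟨hqr, hqcol⟩ | ⟨hqcol, hqr⟩
    · exfalso
      have hqc : (q.2.2 : ℕ) = (q.1.2 : ℕ) := congrArg Fin.val hqcol
      rw [if_neg (by omega : ¬ (q.1.1 : ℕ) = (q.2.1 : ℕ))] at hpq
      omega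
    · have hqc : (q.2.1 : ℕ) = (q.1.1 : ℕ) := congrArg Fin.val hqr
      rw [if_pos (by omega : (q.1.1 : ℕ) = (q.2.1 : ℕ))] at hpq
      have hdisj : ((p.1.1 : ℕ) = (q.1.1 : ℕ) ∧ (p.2.1 : ℕ) = (q.2.1 : ℕ) ∧
          (p.1.2 : ℕ) = (q.1.2 : ℕ) ∧ (p.2.2 : ℕ) = (q.2.2 : ℕ)) ∨
          ((p.1.1 : ℕ) = (q.2.1 : ℕ) ∧ (p.2.1 : ℕ) = (q.1.1 : ℕ) ∧
          (p.1.2 : ℕ) = (q.2.2 : ℕ) ∧ (p.2.2 : ℕ) = (q.1.2 : ℕ)) := by omega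
      rcases hdisj with ⟨e1, e2, e3, e4⟩ | ⟨e1, e2, e3, e4⟩
      · exact Prod.ext (hfin _ _ e1 e3) (hfin _ _ e2 e4)
      · exfalso
        rw [hfin _ _ e1 e3, hfin _ _ e2 e4] at hpt
        omega

set_option maxHeartbeats 1000000 in
lemma out_neighbor_unique {m : ℕ} {c : ℕ} (hc1 : 1 ≤ c) {v a b : Fin 5 × Fin m}
    (hv : (v.2 : ℕ) = c ∨ (v.2 : ℕ) = c + 1)
    (hadja : (gridGraph 5 m).Adj a v)
    (hna : ¬((a.2 : ℕ) = c ∨ (a.2 : ℕ) = c + 1))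
    (hadjb : (gridGraph 5 m).Adj b v)
    (hnb : ¬((b.2 : ℕ) = c ∨ (b.2 : ℕ) = c + 1)) : a = b := by
  have ha := grid_adj.1 hadja
  have hb := grid_adj.1 hadjb
  push_neg at hna hnb
  rcases ha with ⟨_, h2⟩ | ⟨h1, h2⟩
  · have h2' : (a.2 : ℕ) = (v.2 : ℕ) := congrArg Fin.val h2
    omega
  rcases hb with ⟨_, h4⟩ | ⟨h3, h4⟩
  · have h4' : (b.2 : ℕ) = (v.2 : ℕ) := congrArg Fin.val h4
    omega
  have e2 : a.2 = b.2 := Fin.ext (by omega)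
  have e1 : a.1 = b.1 := by rw [h2, h4]
  exact Prod.ext e1 e2

end Aux

set_option maxHeartbeats 2000000 in
theorem stmt_12 (m : ℕ) (hm : 5 ≤ m) (S : Finset (Fin 5 × Fin m))
    (hperc : Percolates (gridGraph 5 m) 3 (↑S)) :
    ∀ i : ℕ, 2 ≤ i → i ≤ m - 1 →
      4 ≤ (S.filter (fun v => (v.2 : ℕ) = i - 1 ∨ (v.2 : ℕ) = i)).card := by
  classical
  intro i hi2 him
  by_contra hlt
  push_neg at hlt
  have hlt3 : (S.filter (fun v => (v.2 : ℕ) = i - 1 ∨ (v.2 : ℕ) = i)).card ≤ 3 := by omega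
  obtain ⟨c, hci, hc⟩ : ∃ c, c + 1 = i ∧ c = i - 1 := ⟨i - 1, by omega, rfl⟩
  have hc1 : 1 ≤ c := by omega
  have hcm : c + 1 < m := by omega
  obtain ⟨t, ht⟩ := exists_time hperc
  set strip : Finset (Fin 5 × Fin m) :=
    Finset.univ.filter (fun v => (v.2 : ℕ) = c ∨ (v.2 : ℕ) = c + 1) with hstrip
  have hmem_strip : ∀ v : Fin 5 × Fin m, v ∈ strip ↔ ((v.2 : ℕ) = c ∨ (v.2 : ℕ) = c + 1) := by
    intro v; simp [hstrip]
  -- strip has 10 vertices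
  have hstripcard : strip.card = 10 := by
    have h1 : strip = Finset.univ ×ˢ
        (Finset.univ.filter (fun j : Fin m => (j : ℕ) = c ∨ (j : ℕ) = c + 1)) := by
      ext a
      simp [hstrip, Finset.mem_product]
    have h2 : (Finset.univ.filter (fun j : Fin m => (j : ℕ) = c ∨ (j : ℕ) = c + 1)) =
        ({⟨c, by omega⟩, ⟨c + 1, by omega⟩} : Finset (Fin m)) := by
      ext j
      simp [Fin.ext_iff]
    have h3 : (({⟨c, by omega⟩, ⟨c + 1, by omega⟩} : Finset (Fin m))).card = 2 := by
      rw [Finset.card_insert_of_notMem (by simp [Fin.ext_iff]), Finset.card_singleton]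
    rw [h1, Finset.card_product, h2, h3]
    simp
  -- each non-seed strip vertex has two distinct earlier strip neighbors
  set bad : Finset (Fin 5 × Fin m) := strip.filter (fun v => v ∉ S) with hbad
  have hsel : ∀ v ∈ bad, ∃ p : (Fin 5 × Fin m) × (Fin 5 × Fin m), p.1 ≠ p.2 ∧
      (p.1 ∈ strip ∧ (gridGraph 5 m).Adj p.1 v ∧ t p.1 < t v) ∧
      (p.2 ∈ strip ∧ (gridGraph 5 m).Adj p.2 v ∧ t p.2 < t v) := by
    intro v hv
    rw [hbad, Finset.mem_filter] at hv
    obtain ⟨hvs, hvS⟩ := hv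
    obtain ⟨T, hTcard, hT⟩ := ht v (by simpa using hvS)
    have hvcol : (v.2 : ℕ) = c ∨ (v.2 : ℕ) = c + 1 := (hmem_strip v).1 hvs
    -- at most one neighbor of v outside the strip
    have hout : (T.filter (fun u => u ∉ strip)).card ≤ 1 := by
      rw [Finset.card_le_one]
      intro a ha b hb
      rw [Finset.mem_filter] at ha hb
      have hacol : ¬((a.2 : ℕ) = c ∨ (a.2 : ℕ) = c + 1) := fun h => ha.2 ((hmem_strip a).2 h)
      have hbcol : ¬((b.2 : ℕ) = c ∨ (b.2 : ℕ) = c + 1) := fun h => hb.2 ((hmem_strip b).2 h)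
      exact out_neighbor_unique hc1 hvcol (hT a ha.1).1 hacol (hT b hb.1).1 hbcol
    have hin : 2 ≤ (T.filter (fun u => u ∈ strip)).card := by
      have hu : T.filter (fun u => u ∈ strip) ∪ T.filter (fun u => u ∉ strip) = T :=
        Finset.filter_union_filter_not_eq _ T
      have hle := Finset.card_union_le (T.filter (fun u => u ∈ strip))
        (T.filter (fun u => u ∉ strip))
      rw [hu] at hle
      omega
    have h2lt : 1 < (T.filter (fun u => u ∈ strip)).card := by omega
    obtain ⟨a, ha, b, hb, hab⟩ := Finset.one_lt_card.1 h2lt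
    rw [Finset.mem_filter] at ha hb
    exact ⟨(a, b), hab, ⟨ha.2, (hT a ha.1).1, (hT a ha.1).2⟩, ⟨hb.2, (hT b hb.1).1, (hT b hb.1).2⟩⟩
  choose f hf using hsel
  -- the set of directed "earlier" pairs, two per bad vertex
  set P : Finset ((Fin 5 × Fin m) × (Fin 5 × Fin m)) :=
    bad.attach.biUnion (fun v =>
      ({((v : Fin 5 × Fin m), (f v.1 v.2).1), ((v : Fin 5 × Fin m), (f v.1 v.2).2)} :
        Finset ((Fin 5 × Fin m) × (Fin 5 × Fin m)))) with hP
  have hPcard : P.card = 2 * bad.card := by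
    rw [hP, Finset.card_biUnion]
    · have : ∀ v ∈ bad.attach,
          (({((v : Fin 5 × Fin m), (f v.1 v.2).1), ((v : Fin 5 × Fin m), (f v.1 v.2).2)} :
            Finset ((Fin 5 × Fin m) × (Fin 5 × Fin m)))).card = 2 := by
        intro v _
        rw [Finset.card_insert_of_notMem, Finset.card_singleton]
        simp only [Finset.mem_singleton]
        intro h
        exact (hf v.1 v.2).1 (congrArg Prod.snd h)
      rw [Finset.sum_congr rfl this]
      simp [Finset.card_attach, mul_comm]
    · intro v _ w _ hvw
      rw [Function.onFun, Finset.disjoint_left]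
      intro x hx hx'
      simp only [Finset.mem_insert, Finset.mem_singleton] at hx hx'
      apply hvw
      apply Subtype.ext
      have h1 : x.1 = (v : Fin 5 × Fin m) := by rcases hx with h | h <;> rw [h]
      have h2 : x.1 = (w : Fin 5 × Fin m) := by rcases hx' with h | h <;> rw [h]
      rw [← h1, h2]
  -- properties of pairs in P
  have hPprop : ∀ p ∈ P, p.1 ∈ strip ∧ p.2 ∈ strip ∧
      (gridGraph 5 m).Adj p.2 p.1 ∧ t p.2 < t p.1 := by
    intro p hp
    rw [hP, Finset.mem_biUnion] at hp
    obtain ⟨v, _, hv⟩ := hp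
    have h1 := (hf v.1 v.2).2.1
    have h2 := (hf v.1 v.2).2.2
    have hv1strip : (v : Fin 5 × Fin m) ∈ strip := (Finset.mem_filter.mp v.2).1
    simp only [Finset.mem_insert, Finset.mem_singleton] at hv
    rcases hv with h | h <;> rw [h]
    · exact ⟨hv1strip, h1.1, h1.2.1, h1.2.2⟩
    · exact ⟨hv1strip, h2.1, h2.2.1, h2.2.2⟩
  -- encode each pair by the (undirected) edge it uses; 13 possible edges
  have hPle : P.card ≤ 13 := by
    have h13 : (Finset.range 13).card = 13 := Finset.card_range 13
    rw [← h13]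
    apply Finset.card_le_card_of_injOn (pcode c)
    · intro p hp
      obtain ⟨h1, h2, hadj, _⟩ := hPprop p hp
      rw [hmem_strip] at h1 h2
      exact Finset.mem_range.2 (pcode_lt c t p h1 h2 hadj)
    · intro p hp q hq hpq
      simp only [Finset.mem_coe] at hp hq
      obtain ⟨hp1, hp2, hpadj, hpt⟩ := hPprop p hp
      obtain ⟨hq1, hq2, hqadj, hqt⟩ := hPprop q hq
      rw [hmem_strip] at hp1 hp2 hq1 hq2
      exact pcode_inj c t p q hp1 hp2 hpadj hpt hq1 hq2 hqadj hqt hpq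
  -- count bad vertices
  have hSfilter : strip.filter (fun v => v ∈ S) =
      S.filter (fun v => (v.2 : ℕ) = i - 1 ∨ (v.2 : ℕ) = i) := by
    ext a
    simp only [Finset.mem_filter, hmem_strip]
    constructor
    · rintro ⟨h1, h2⟩
      exact ⟨h2, by omega⟩
    · rintro ⟨h1, h2⟩
      exact ⟨by omega, h1⟩
  have hbadcard : 7 ≤ bad.card := by
    have hu : strip.filter (fun v => v ∈ S) ∪ strip.filter (fun v => v ∉ S) = strip :=
      Finset.filter_union_filter_not_eq _ strip
    have hle := Finset.card_union_le (strip.filter (fun v => v ∈ S))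
      (strip.filter (fun v => v ∉ S))
    rw [hu] at hle
    rw [hSfilter] at hle
    have hbe : bad = strip.filter (fun v => v ∉ S) := hbad
    rw [hbe]
    omega
  omega
end
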